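/- Let U ⊆ ℂ be open, let F, G : U → ℂ be holomorphic, and define x(u+iv) = (Re h₁, −Im h₁, Re h₃) where h₁' = F and h₃' = −F·G. Then at every z₀ ∈ U with F(z₀) ≠ 0: g₁₁ = g₂₂ = |F(z₀)|², g₁₂ = 0; the second fundamental form coefficients satisfy h₁₁ = −Re(FG')(z₀), h₁₂ = Im(FG')(z₀), h₂₂ = Re(FG')(z₀); and the isotropic Gaussian curvature is K(z₀) = −|G'(z₀)/F(z₀)|². -/

import Mathlib

noncomputable section

/-- Partial derivative of a map on ℂ ≅ ℝ² in the u-direction (real direction 1). -/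
def du {E : Type*} [NormedAddCommGroup E] [NormedSpace ℝ E]
    (f : ℂ → E) : ℂ → E := fun z => fderiv ℝ f z 1

/-- Partial derivative of a map on ℂ ≅ ℝ² in the v-direction (direction i). -/
def dv {E : Type*} [NormedAddCommGroup E] [NormedSpace ℝ E]
    (f : ℂ → E) : ℂ → E := fun z => fderiv ℝ f z Complex.I

/-- The degenerate simply isotropic inner product on ℝ³: ⟨u,v⟩ = u₁v₁ + u₂v₂. -/
def isoInner (a b : ℝ × ℝ × ℝ) : ℝ := a.1 * b.1 + a.2.1 * b.2.1

/-- The Euclidean dot product on ℝ³. -/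
def dot3 (a b : ℝ × ℝ × ℝ) : ℝ := a.1 * b.1 + a.2.1 * b.2.1 + a.2.2 * b.2.2

/-- The Euclidean cross product on ℝ³. -/
def cross3 (a b : ℝ × ℝ × ℝ) : ℝ × ℝ × ℝ :=
  (a.2.1 * b.2.2 - a.2.2 * b.2.1, a.2.2 * b.1 - a.1 * b.2.2, a.1 * b.2.1 - a.2.1 * b.1)

/-- First fundamental form coefficients (isotropic metric) of x : ℂ → ℝ³. -/
def g11 (x : ℂ → ℝ × ℝ × ℝ) (z : ℂ) : ℝ := isoInner (du x z) (du x z)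
def g12 (x : ℂ → ℝ × ℝ × ℝ) (z : ℂ) : ℝ := isoInner (du x z) (dv x z)
def g22 (x : ℂ → ℝ × ℝ × ℝ) (z : ℂ) : ℝ := isoInner (dv x z) (dv x z)

/-- The minimal normal: the unique vector of the form (n₁,n₂,1) Euclidean-orthogonal to
x_u and x_v (obtained by normalizing the cross product so its third component is 1). -/
def Nm (x : ℂ → ℝ × ℝ × ℝ) (z : ℂ) : ℝ × ℝ × ℝ :=
  ((cross3 (du x z) (dv x z)).1 / (cross3 (du x z) (dv x z)).2.2,
   (cross3 (du x z) (dv x z)).2.1 / (cross3 (du x z) (dv x z)).2.2, 1)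

/-- Second fundamental form coefficients with respect to the minimal normal. -/
def h11 (x : ℂ → ℝ × ℝ × ℝ) (z : ℂ) : ℝ := dot3 (du (du x) z) (Nm x z)
def h12 (x : ℂ → ℝ × ℝ × ℝ) (z : ℂ) : ℝ := dot3 (du (dv x) z) (Nm x z)
def h22 (x : ℂ → ℝ × ℝ × ℝ) (z : ℂ) : ℝ := dot3 (dv (dv x) z) (Nm x z)

/-- The isotropic Gaussian curvature. -/
def Kcurv (x : ℂ → ℝ × ℝ × ℝ) (z : ℂ) : ℝ :=
  (h11 x z * h22 x z - (h12 x z) ^ 2) / (g11 x z * g22 x z - (g12 x z) ^ 2)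

/-- The isotropic mean curvature. -/
def meanH (x : ℂ → ℝ × ℝ × ℝ) (z : ℂ) : ℝ :=
  (g11 x z * h22 x z - 2 * g12 x z * h12 x z + g22 x z * h11 x z) /
    (2 * (g11 x z * g22 x z - (g12 x z) ^ 2))


private lemma keyT (f g : ℂ → ℂ) (c d : ℂ) (z w₀ : ℂ)
    (hf : HasDerivAt f c z) (hg : HasDerivAt g d z) :
    fderiv ℝ (fun w => ((f w).re, -(f w).im, (g w).re)) z w₀
      = ((w₀ * c).re, -(w₀ * c).im, (w₀ * d).re) := by
  have hf' : HasFDerivAt f (((1 : ℂ →L[ℂ] ℂ).smulRight c).restrictScalars ℝ) z :=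
    hf.hasFDerivAt.restrictScalars ℝ
  have hg' : HasFDerivAt g (((1 : ℂ →L[ℂ] ℂ).smulRight d).restrictScalars ℝ) z :=
    hg.hasFDerivAt.restrictScalars ℝ
  have h1 := Complex.reCLM.hasFDerivAt.comp z hf'
  have h2 := (Complex.imCLM.hasFDerivAt.comp z hf').neg
  have h3 := Complex.reCLM.hasFDerivAt.comp z hg'
  have H : HasFDerivAt (fun w => ((f w).re, -(f w).im, (g w).re)) _ z := h1.prodMk (h2.prodMk h3)
  rw [H.fderiv]
  simp [smul_eq_mul, mul_comm]

private lemma keyS (f g : ℂ → ℂ) (c d : ℂ) (z w₀ : ℂ)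
    (hf : HasDerivAt f c z) (hg : HasDerivAt g d z) :
    fderiv ℝ (fun w => (-(f w).im, -(f w).re, (g w).im)) z w₀
      = (-(w₀ * c).im, -(w₀ * c).re, (w₀ * d).im) := by
  have hf' : HasFDerivAt f (((1 : ℂ →L[ℂ] ℂ).smulRight c).restrictScalars ℝ) z :=
    hf.hasFDerivAt.restrictScalars ℝ
  have hg' : HasFDerivAt g (((1 : ℂ →L[ℂ] ℂ).smulRight d).restrictScalars ℝ) z :=
    hg.hasFDerivAt.restrictScalars ℝ
  have h1 := (Complex.imCLM.hasFDerivAt.comp z hf').neg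
  have h2 := (Complex.reCLM.hasFDerivAt.comp z hf').neg
  have h3 := Complex.imCLM.hasFDerivAt.comp z hg'
  have H : HasFDerivAt (fun w => (-(f w).im, -(f w).re, (g w).im)) _ z := h1.prodMk (h2.prodMk h3)
  rw [H.fderiv]
  simp [smul_eq_mul, mul_comm]

/-- For the Weierstrass data φ = (F, iF, −FG) (i.e. x = (Re h₁, −Im h₁, Re h₃) with
h₁' = F, h₃' = −F·G), at every z₀ with F(z₀) ≠ 0 one has g₁₁ = g₂₂ = |F|², g₁₂ = 0,
h₁₁ = −Re(FG'), h₁₂ = Im(FG'), h₂₂ = Re(FG'), and K = −|G'/F|². -/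
theorem stmt15 (U : Set ℂ) (hU : IsOpen U) (F G h₁ h₃ : ℂ → ℂ)
    (hF : DifferentiableOn ℂ F U) (hG : DifferentiableOn ℂ G U)
    (hh₁ : ∀ z ∈ U, HasDerivAt h₁ (F z) z)
    (hh₃ : ∀ z ∈ U, HasDerivAt h₃ (-(F z * G z)) z) :
    ∀ z₀ ∈ U, F z₀ ≠ 0 →
      g11 (fun w => ((h₁ w).re, -(h₁ w).im, (h₃ w).re)) z₀ = ‖F z₀‖ ^ 2 ∧
      g22 (fun w => ((h₁ w).re, -(h₁ w).im, (h₃ w).re)) z₀ = ‖F z₀‖ ^ 2 ∧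
      g12 (fun w => ((h₁ w).re, -(h₁ w).im, (h₃ w).re)) z₀ = 0 ∧
      h11 (fun w => ((h₁ w).re, -(h₁ w).im, (h₃ w).re)) z₀ = -(F z₀ * deriv G z₀).re ∧
      h12 (fun w => ((h₁ w).re, -(h₁ w).im, (h₃ w).re)) z₀ = (F z₀ * deriv G z₀).im ∧
      h22 (fun w => ((h₁ w).re, -(h₁ w).im, (h₃ w).re)) z₀ = (F z₀ * deriv G z₀).re ∧
      Kcurv (fun w => ((h₁ w).re, -(h₁ w).im, (h₃ w).re)) z₀ =
        -(‖deriv G z₀ / F z₀‖ ^ 2) := by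
  intro z₀ hz₀ hF0
  set x : ℂ → ℝ × ℝ × ℝ := fun w => ((h₁ w).re, -(h₁ w).im, (h₃ w).re) with hxdef
  have hmem : U ∈ nhds z₀ := hU.mem_nhds hz₀
  have hF' : HasDerivAt F (deriv F z₀) z₀ := (hF.differentiableAt hmem).hasDerivAt
  have hG' : HasDerivAt G (deriv G z₀) z₀ := (hG.differentiableAt hmem).hasDerivAt
  have hFG : HasDerivAt (fun z => F z * G z)
      (deriv F z₀ * G z₀ + F z₀ * deriv G z₀) z₀ := hF'.mul hG'
  have hp : ∀ z ∈ U, du x z = ((F z).re, -(F z).im, (-(F z * G z)).re) := by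
    intro z hz
    have h := keyT h₁ h₃ (F z) (-(F z * G z)) z 1 (hh₁ z hz) (hh₃ z hz)
    simpa [du, hxdef] using h
  have hq : ∀ z ∈ U, dv x z = (-(F z).im, -(F z).re, (F z * G z).im) := by
    intro z hz
    have h := keyT h₁ h₃ (F z) (-(F z * G z)) z Complex.I (hh₁ z hz) (hh₃ z hz)
    simpa [dv, hxdef, Complex.mul_re, Complex.mul_im] using h
  have hpe : du x =ᶠ[nhds z₀] (fun z => ((F z).re, -(F z).im, (-(F z * G z)).re)) :=
    Filter.eventuallyEq_of_mem hmem hp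
  have hqe : dv x =ᶠ[nhds z₀] (fun z => (-(F z).im, -(F z).re, (F z * G z).im)) :=
    Filter.eventuallyEq_of_mem hmem hq
  have e1 : du x z₀ = ((F z₀).re, -(F z₀).im, (-(F z₀ * G z₀)).re) := hp z₀ hz₀
  have e2 : dv x z₀ = (-(F z₀).im, -(F z₀).re, (F z₀ * G z₀).im) := hq z₀ hz₀
  have e3 : du (du x) z₀ = ((deriv F z₀).re, -(deriv F z₀).im,
      -(deriv F z₀ * G z₀ + F z₀ * deriv G z₀).re) := by
    show fderiv ℝ (du x) z₀ 1 = _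
    rw [hpe.fderiv_eq]
    have h := keyT F (fun z => -(F z * G z)) (deriv F z₀)
      (-(deriv F z₀ * G z₀ + F z₀ * deriv G z₀)) z₀ 1 hF' hFG.neg
    simpa using h
  have e4 : du (dv x) z₀ = (-(deriv F z₀).im, -(deriv F z₀).re,
      (deriv F z₀ * G z₀ + F z₀ * deriv G z₀).im) := by
    show fderiv ℝ (dv x) z₀ 1 = _
    rw [hqe.fderiv_eq]
    have h := keyS F (fun z => F z * G z) (deriv F z₀)
      (deriv F z₀ * G z₀ + F z₀ * deriv G z₀) z₀ 1 hF' hFG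
    simpa using h
  have e5 : dv (dv x) z₀ = (-(deriv F z₀).re, (deriv F z₀).im,
      (deriv F z₀ * G z₀ + F z₀ * deriv G z₀).re) := by
    show fderiv ℝ (dv x) z₀ Complex.I = _
    rw [hqe.fderiv_eq]
    have h := keyS F (fun z => F z * G z) (deriv F z₀)
      (deriv F z₀ * G z₀ + F z₀ * deriv G z₀) z₀ Complex.I hF' hFG
    simpa [Complex.mul_re, Complex.mul_im] using h
  have hne : (F z₀).re * (F z₀).re + (F z₀).im * (F z₀).im ≠ 0 := by
    simpa [Complex.normSq_apply] using (Complex.normSq_pos.mpr hF0).ne'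
  have hne3 : (F z₀).re * -(F z₀).re - -(F z₀).im * -(F z₀).im ≠ 0 := by
    rw [show (F z₀).re * -(F z₀).re - -(F z₀).im * -(F z₀).im
        = -((F z₀).re * (F z₀).re + (F z₀).im * (F z₀).im) from by ring]
    exact neg_ne_zero.mpr hne
  have hNm : Nm x z₀ = ((G z₀).re, (G z₀).im, 1) := by
    simp only [Nm, cross3, e1, e2]
    refine Prod.ext ?_ (Prod.ext ?_ rfl) <;>
    · rw [div_eq_iff hne3]
      simp only [Complex.mul_re, Complex.mul_im, Complex.neg_re, Complex.neg_im]
      ring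
  have G11 : g11 x z₀ = ‖F z₀‖ ^ 2 := by
    simp only [g11, isoInner, e1]
    rw [Complex.sq_norm, Complex.normSq_apply]; ring
  have G22 : g22 x z₀ = ‖F z₀‖ ^ 2 := by
    simp only [g22, isoInner, e2]
    rw [Complex.sq_norm, Complex.normSq_apply]; ring
  have G12 : g12 x z₀ = 0 := by
    simp only [g12, isoInner, e1, e2]; ring
  have H11 : h11 x z₀ = -(F z₀ * deriv G z₀).re := by
    simp only [h11, dot3, e3, hNm]
    simp only [Complex.add_re, Complex.mul_re, Complex.mul_im]
    ring
  have H12 : h12 x z₀ = (F z₀ * deriv G z₀).im := by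
    simp only [h12, dot3, e4, hNm]
    simp only [Complex.add_im, Complex.mul_re, Complex.mul_im]
    ring
  have H22 : h22 x z₀ = (F z₀ * deriv G z₀).re := by
    simp only [h22, dot3, e5, hNm]
    simp only [Complex.add_re, Complex.mul_re, Complex.mul_im]
    ring
  refine ⟨G11, G22, G12, H11, H12, H22, ?_⟩
  rw [Kcurv, G11, G22, G12, H11, H12, H22]
  have hns : Complex.normSq (F z₀) ≠ 0 := (Complex.normSq_pos.mpr hF0).ne'
  have h2 : ‖deriv G z₀ / F z₀‖ ^ 2
      = Complex.normSq (deriv G z₀) / Complex.normSq (F z₀) := by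
    rw [Complex.sq_norm, map_div₀]
  have h3 : -(F z₀ * deriv G z₀).re * (F z₀ * deriv G z₀).re - (F z₀ * deriv G z₀).im ^ 2
      = -(Complex.normSq (F z₀) * Complex.normSq (deriv G z₀)) := by
    rw [← Complex.normSq_mul, Complex.normSq_apply]; ring
  rw [Complex.sq_norm, h2, h3]
  field_simp
  ring
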